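/- Let c_p, c_d > 0 (prefill and decode costs) and B > 0, and consider minimising over continuous K ≥ 1 the function F(K) = (c_p + K·c_d)·(1 + 1/√K)², obtained by substituting the budget-saturating n = B/(c_p + K·c_d) into the squared sampling proxy. Then F'(K) = c_d + c_d·K^{-1/2} - c_p·K^{-3/2} - c_p·K^{-2}, and K²F'(K) factors (after the substitution u = √K) as (u+1)(c_d·u³ - c_p); hence the unique interior stationary point is K = (c_p/c_d)^{2/3}, and the constrained minimiser is K* = max{1, (c_p/c_d)^{2/3}}. -/

import Mathlib

-- rpow conversions
lemma rpow_half_neg {K : ℝ} (hK : 0 < K) : K ^ (-(1:ℝ)/2) = (Real.sqrt K)⁻¹ := by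
  rw [neg_div, Real.rpow_neg hK.le, Real.sqrt_eq_rpow]

lemma rpow_threehalf_neg {K : ℝ} (hK : 0 < K) : K ^ (-(3:ℝ)/2) = (Real.sqrt K)⁻¹ / K := by
  rw [neg_div, Real.rpow_neg hK.le, show (3:ℝ)/2 = 1/2 + 1 by norm_num,
    Real.rpow_add hK, Real.rpow_one, ← Real.sqrt_eq_rpow, mul_inv, div_eq_mul_inv]

lemma rpow_negtwo {K : ℝ} (hK : 0 < K) : K ^ (-(2:ℝ)) = (K^2)⁻¹ := by
  rw [Real.rpow_neg hK.le, show (2:ℝ) = ((2:ℕ):ℝ) by norm_num, Real.rpow_natCast]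

lemma deriv_lemma (cp cd : ℝ) (K : ℝ) (hK : 0 < K) :
    HasDerivAt (fun K : ℝ => (cp + K * cd) * (1 + 1 / Real.sqrt K) ^ 2)
      (cd + cd * K ^ (-(1 : ℝ) / 2) - cp * K ^ (-(3 : ℝ) / 2) - cp * K ^ (-(2 : ℝ))) K := by
  have hs : Real.sqrt K ≠ 0 := (Real.sqrt_pos.mpr hK).ne'
  have hsp : 0 < Real.sqrt K := Real.sqrt_pos.mpr hK
  have h1 : HasDerivAt Real.sqrt (1 / (2 * Real.sqrt K)) K := Real.hasDerivAt_sqrt hK.ne'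
  have h2 : HasDerivAt (fun K => (Real.sqrt K)⁻¹)
      (-(1 / (2 * Real.sqrt K)) / Real.sqrt K ^ 2) K := h1.inv hs
  have h3 : HasDerivAt (fun K => (1 + (Real.sqrt K)⁻¹) ^ 2)
      ((2:ℕ) * (1 + (Real.sqrt K)⁻¹) ^ 1 * (-(1 / (2 * Real.sqrt K)) / Real.sqrt K ^ 2)) K :=
    (h2.const_add 1).pow 2
  have h4 : HasDerivAt (fun K : ℝ => cp + K * cd) cd K := by
    simpa using ((hasDerivAt_id K).mul_const cd).const_add cp
  have h5 := h4.mul h3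
  have heq : (fun K : ℝ => (cp + K * cd) * (1 + 1 / Real.sqrt K) ^ 2)
      = fun K : ℝ => (cp + K * cd) * (1 + (Real.sqrt K)⁻¹) ^ 2 := by
    simp [one_div]
  rw [heq]
  refine HasDerivAt.congr_deriv h5 ?_
  rw [rpow_half_neg hK, rpow_threehalf_neg hK, rpow_negtwo hK]
  have hK2 : Real.sqrt K ^ 2 = K := Real.sq_sqrt hK.le
  set s := Real.sqrt K with hsdef
  rw [← hK2]
  field_simp
  ring

lemma factor_lemma (cp cd : ℝ) (K : ℝ) (hK : 0 < K) :
    K ^ 2 * (cd + cd * K ^ (-(1 : ℝ) / 2) - cp * K ^ (-(3 : ℝ) / 2) - cp * K ^ (-(2 : ℝ)))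
      = (Real.sqrt K + 1) * (cd * Real.sqrt K ^ 3 - cp) := by
  have hs : Real.sqrt K ≠ 0 := (Real.sqrt_pos.mpr hK).ne'
  have hK2 : Real.sqrt K ^ 2 = K := Real.sq_sqrt hK.le
  rw [rpow_half_neg hK, rpow_threehalf_neg hK, rpow_negtwo hK]
  set s := Real.sqrt K with hsdef
  rw [← hK2]
  field_simp
  ring

lemma stationary_lemma (cp cd : ℝ) (hcp : 0 < cp) (hcd : 0 < cd) (K : ℝ) (hK : 0 < K) :
    cd + cd * K ^ (-(1 : ℝ) / 2) - cp * K ^ (-(3 : ℝ) / 2) - cp * K ^ (-(2 : ℝ)) = 0 ↔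
      K = (cp / cd) ^ ((2 : ℝ) / 3) := by
  have hsp : 0 < Real.sqrt K := Real.sqrt_pos.mpr hK
  have ha : 0 < cp / cd := div_pos hcp hcd
  constructor
  · intro h
    have h2 : (Real.sqrt K + 1) * (cd * Real.sqrt K ^ 3 - cp) = 0 := by
      rw [← factor_lemma cp cd K hK, h, mul_zero]
    have h3 : cd * Real.sqrt K ^ 3 - cp = 0 := by
      rcases mul_eq_zero.mp h2 with h | h
      · nlinarith
      · exact h
    have h4 : Real.sqrt K ^ 3 = cp / cd := by
      field_simp at h3 ⊢
      linarith
    have h5 : Real.sqrt K = (cp / cd) ^ ((1:ℝ)/3) := by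
      have : (Real.sqrt K ^ (3:ℕ) : ℝ) ^ ((1:ℝ)/3) = (cp/cd) ^ ((1:ℝ)/3) := by rw [h4]
      rw [← Real.rpow_natCast (Real.sqrt K) 3, ← Real.rpow_mul hsp.le] at this
      norm_num at this
      exact this
    have h6 : K = Real.sqrt K ^ 2 := (Real.sq_sqrt hK.le).symm
    rw [h6, h5, ← Real.rpow_natCast _ 2, ← Real.rpow_mul ha.le]
    norm_num
  · intro h
    have h5 : Real.sqrt K = (cp / cd) ^ ((1:ℝ)/3) := by
      rw [h, Real.sqrt_eq_rpow, ← Real.rpow_mul ha.le]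
      norm_num
    have h4 : Real.sqrt K ^ 3 = cp / cd := by
      rw [h5, ← Real.rpow_natCast _ 3, ← Real.rpow_mul ha.le]
      norm_num
    have h3 : cd * Real.sqrt K ^ 3 - cp = 0 := by
      rw [h4]; field_simp; ring
    have h2 : K ^ 2 * (cd + cd * K ^ (-(1 : ℝ) / 2) - cp * K ^ (-(3 : ℝ) / 2) - cp * K ^ (-(2 : ℝ))) = 0 := by
      rw [factor_lemma cp cd K hK, h3, mul_zero]
    rcases mul_eq_zero.mp h2 with h | h
    · exact absurd h (pow_ne_zero 2 hK.ne')
    · exact h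

lemma sqrt_K0 (cp cd : ℝ) (hcp : 0 < cp) (hcd : 0 < cd) :
    Real.sqrt ((cp / cd) ^ ((2:ℝ)/3)) = (cp / cd) ^ ((1:ℝ)/3) := by
  have ha : 0 < cp / cd := div_pos hcp hcd
  rw [Real.sqrt_eq_rpow, ← Real.rpow_mul ha.le]
  norm_num

lemma cube_sqrt_K0 (cp cd : ℝ) (hcp : 0 < cp) (hcd : 0 < cd) :
    Real.sqrt ((cp / cd) ^ ((2:ℝ)/3)) ^ 3 = cp / cd := by
  have ha : 0 < cp / cd := div_pos hcp hcd
  rw [sqrt_K0 cp cd hcp hcd, ← Real.rpow_natCast _ 3, ← Real.rpow_mul ha.le]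
  norm_num

lemma deriv_sign_pos (cp cd : ℝ) (hcp : 0 < cp) (hcd : 0 < cd) (K : ℝ) (hK : 0 < K)
    (h : (cp / cd) ^ ((2:ℝ)/3) ≤ K) :
    0 ≤ cd + cd * K ^ (-(1 : ℝ) / 2) - cp * K ^ (-(3 : ℝ) / 2) - cp * K ^ (-(2 : ℝ)) := by
  have hK2 : (0:ℝ) < K ^ 2 := by positivity
  have hm : Real.sqrt ((cp / cd) ^ ((2:ℝ)/3)) ≤ Real.sqrt K := Real.sqrt_le_sqrt h
  have hs0 : (0:ℝ) ≤ Real.sqrt ((cp / cd) ^ ((2:ℝ)/3)) := Real.sqrt_nonneg _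
  have hcube : cp / cd ≤ Real.sqrt K ^ 3 := by
    rw [← cube_sqrt_K0 cp cd hcp hcd]
    exact pow_le_pow_left₀ hs0 hm 3
  have h2 : 0 ≤ cd * Real.sqrt K ^ 3 - cp := by
    rw [sub_nonneg]
    exact (div_le_iff₀' hcd).mp hcube
  have h3 : 0 ≤ (Real.sqrt K + 1) * (cd * Real.sqrt K ^ 3 - cp) :=
    mul_nonneg (by positivity) h2
  nlinarith [factor_lemma cp cd K hK]

lemma deriv_sign_neg (cp cd : ℝ) (hcp : 0 < cp) (hcd : 0 < cd) (K : ℝ) (hK : 0 < K)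
    (h : K ≤ (cp / cd) ^ ((2:ℝ)/3)) :
    cd + cd * K ^ (-(1 : ℝ) / 2) - cp * K ^ (-(3 : ℝ) / 2) - cp * K ^ (-(2 : ℝ)) ≤ 0 := by
  have hK2 : (0:ℝ) < K ^ 2 := by positivity
  have hm : Real.sqrt K ≤ Real.sqrt ((cp / cd) ^ ((2:ℝ)/3)) := Real.sqrt_le_sqrt h
  have hcube : Real.sqrt K ^ 3 ≤ cp / cd := by
    rw [← cube_sqrt_K0 cp cd hcp hcd]
    exact pow_le_pow_left₀ (Real.sqrt_nonneg K) hm 3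
  have h2 : cd * Real.sqrt K ^ 3 - cp ≤ 0 := by
    rw [sub_nonpos]
    exact (le_div_iff₀' hcd).mp hcube
  have h3 : (Real.sqrt K + 1) * (cd * Real.sqrt K ^ 3 - cp) ≤ 0 :=
    mul_nonpos_of_nonneg_of_nonpos (by positivity) h2
  nlinarith [factor_lemma cp cd K hK]

lemma min_lemma (cp cd : ℝ) (hcp : 0 < cp) (hcd : 0 < cd) :
    ∀ K : ℝ, 1 ≤ K →
      (cp + max 1 ((cp / cd) ^ ((2 : ℝ) / 3)) * cd) *
          (1 + 1 / Real.sqrt (max 1 ((cp / cd) ^ ((2 : ℝ) / 3)))) ^ 2 ≤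
        (cp + K * cd) * (1 + 1 / Real.sqrt K) ^ 2 := by
  set K0 : ℝ := (cp / cd) ^ ((2:ℝ)/3) with hK0def
  set Kst : ℝ := max 1 K0 with hKstdef
  set F : ℝ → ℝ := fun K => (cp + K * cd) * (1 + 1 / Real.sqrt K) ^ 2 with hFdef
  have hKst1 : (1:ℝ) ≤ Kst := le_max_left _ _
  have hKst0 : K0 ≤ Kst := le_max_right _ _
  have hdiff : ∀ x : ℝ, 0 < x → DifferentiableAt ℝ F x := fun x hx =>
    (deriv_lemma cp cd x hx).differentiableAt
  have hderiv : ∀ x : ℝ, 0 < x → deriv F x =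
      cd + cd * x ^ (-(1 : ℝ) / 2) - cp * x ^ (-(3 : ℝ) / 2) - cp * x ^ (-(2 : ℝ)) :=
    fun x hx => (deriv_lemma cp cd x hx).deriv
  -- monotone on [Kst, ∞)
  have hmono : MonotoneOn F (Set.Ici Kst) := by
    apply monotoneOn_of_deriv_nonneg (convex_Ici Kst)
    · exact fun x hx => (hdiff x (lt_of_lt_of_le one_pos (le_trans hKst1 hx))).continuousAt.continuousWithinAt
    · intro x hx
      rw [interior_Ici] at hx
      exact (hdiff x (lt_of_le_of_lt zero_le_one (lt_of_le_of_lt hKst1 hx))).differentiableWithinAt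
    · intro x hx
      rw [interior_Ici] at hx
      have hx0 : 0 < x := lt_of_le_of_lt zero_le_one (lt_of_le_of_lt hKst1 hx)
      rw [hderiv x hx0]
      exact deriv_sign_pos cp cd hcp hcd x hx0 (le_of_lt (lt_of_le_of_lt hKst0 hx))
  intro K hK1
  rcases le_total Kst K with hc | hc
  · exact hmono (Set.mem_Ici.mpr le_rfl) (Set.mem_Ici.mpr hc) hc
  · by_cases h1 : K0 ≤ 1
    · have : Kst = 1 := max_eq_left h1
      have hKeq : K = 1 := le_antisymm (this ▸ hc) hK1
      rw [this, hKeq]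
    · push_neg at h1
      have hKsteq : Kst = K0 := max_eq_right h1.le
      have hanti : AntitoneOn F (Set.Icc 1 K0) := by
        apply antitoneOn_of_deriv_nonpos (convex_Icc 1 K0)
        · exact fun x hx => (hdiff x (lt_of_lt_of_le one_pos hx.1)).continuousAt.continuousWithinAt
        · intro x hx
          rw [interior_Icc] at hx
          exact (hdiff x (lt_of_le_of_lt zero_le_one hx.1)).differentiableWithinAt
        · intro x hx
          rw [interior_Icc] at hx
          have hx0 : 0 < x := lt_of_le_of_lt zero_le_one hx.1
          rw [hderiv x hx0]
          exact deriv_sign_neg cp cd hcp hcd x hx0 hx.2.le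
      rw [hKsteq] at hc ⊢
      exact hanti (Set.mem_Icc.mpr ⟨hK1, hc⟩) (Set.mem_Icc.mpr ⟨h1.le, le_rfl⟩) hc


/-- Optimal rollout allocation under prefill/decode costs: for `c_p, c_d > 0` and
`F(K) = (c_p + K·c_d)·(1 + 1/√K)²`, one has for all `K > 0` the derivative
`F'(K) = c_d + c_d·K^{-1/2} - c_p·K^{-3/2} - c_p·K^{-2}`; with `u = √K`, `K²·F'(K)`
factors as `(u+1)·(c_d·u³ - c_p)`, so the unique interior stationary point is
`K = (c_p/c_d)^{2/3}`, and the minimiser over `K ≥ 1` is `K* = max{1, (c_p/c_d)^{2/3}}`. -/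
theorem optimal_rollout_allocation_prefill_decode (cp cd : ℝ) (hcp : 0 < cp) (hcd : 0 < cd) :
    (∀ K : ℝ, 0 < K →
      HasDerivAt (fun K : ℝ => (cp + K * cd) * (1 + 1 / Real.sqrt K) ^ 2)
        (cd + cd * K ^ (-(1 : ℝ) / 2) - cp * K ^ (-(3 : ℝ) / 2) - cp * K ^ (-(2 : ℝ))) K) ∧
    (∀ K : ℝ, 0 < K →
      K ^ 2 * (cd + cd * K ^ (-(1 : ℝ) / 2) - cp * K ^ (-(3 : ℝ) / 2) - cp * K ^ (-(2 : ℝ)))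
        = (Real.sqrt K + 1) * (cd * Real.sqrt K ^ 3 - cp)) ∧
    (∀ K : ℝ, 0 < K →
      (cd + cd * K ^ (-(1 : ℝ) / 2) - cp * K ^ (-(3 : ℝ) / 2) - cp * K ^ (-(2 : ℝ)) = 0 ↔
        K = (cp / cd) ^ ((2 : ℝ) / 3))) ∧
    (∀ K : ℝ, 1 ≤ K →
      (cp + max 1 ((cp / cd) ^ ((2 : ℝ) / 3)) * cd) *
          (1 + 1 / Real.sqrt (max 1 ((cp / cd) ^ ((2 : ℝ) / 3)))) ^ 2 ≤
        (cp + K * cd) * (1 + 1 / Real.sqrt K) ^ 2) := by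
  exact ⟨fun K hK => deriv_lemma cp cd K hK, fun K hK => factor_lemma cp cd K hK,
    fun K hK => stationary_lemma cp cd hcp hcd K hK, min_lemma cp cd hcp hcd⟩
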